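/- Let π be a one-block factor code from a one-step SFT X onto a sofic shift Y. Then the class degree c_π is computable: c_π equals the minimum depth |M| over all transition blocks (W, n, M) with |W| ≤ |𝒜(Y)| · 2^{f² + f + 1}, where f = max_{w ∈ 𝒜(Y)} |π_b^{-1}(w)|. -/

import Mathlib

open List

/-- `U` is a (nonempty) block of the one-step SFT `X` determined by the
transition relation `TX`. -/
def IsXBlock {AX : Type*} (TX : AX → AX → Prop) (U : List AX) : Prop :=
  U ≠ [] ∧ U.Chain' TX

/-- The set of `X`-blocks mapping (symbol-wise, via `πb`) to the word `W`. -/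
def preim {AX AY : Type*} (TX : AX → AX → Prop) (πb : AX → AY) (W : List AY) :
    Set (List AX) :=
  {U | IsXBlock TX U ∧ U.map πb = W}

/-- `W` is a block of the sofic shift `Y = π(X)`. -/
def IsYBlock {AX AY : Type*} (TX : AX → AX → Prop) (πb : AX → AY) (W : List AY) : Prop :=
  (preim TX πb W).Nonempty

/-- `π_b^{-1}(W)_i`: the symbols occurring at position `i` in some preimage block of `W`. -/
def preimAt {AX AY : Type*} (TX : AX → AX → Prop) (πb : AX → AY) (W : List AY) (i : ℕ) :
    Set AX :=
  {a | ∃ U ∈ preim TX πb W, U[i]? = some a}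

/-- The `W`-pairing: the set of (first symbol, last symbol) pairs realized by
preimage blocks of `W`. -/
def pairing {AX AY : Type*} (TX : AX → AX → Prop) (πb : AX → AY) (W : List AY) :
    Set (AX × AX) :=
  {p | ∃ U ∈ preim TX πb W, U.head? = some p.1 ∧ U.getLast? = some p.2}

/-- `U ∈ π_b^{-1}(W)` is routable through `a` at time `n`. -/
def Routable {AX AY : Type*} (TX : AX → AX → Prop) (πb : AX → AY) (W : List AY) (n : ℕ)
    (a : AX) (U : List AX) : Prop :=
  ∃ U' ∈ preim TX πb W, U'.head? = U.head? ∧ U'[n]? = some a ∧ U'.getLast? = U.getLast?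

/-- `(W, n, M)` is a transition block. -/
def IsTransBlock {AX AY : Type*} (TX : AX → AX → Prop) (πb : AX → AY) (W : List AY)
    (n : ℕ) (M : Finset AX) : Prop :=
  IsYBlock TX πb W ∧ 0 < n ∧ n < W.length - 1 ∧
    (∀ a ∈ M, a ∈ preimAt TX πb W n) ∧
    ∀ U ∈ preim TX πb W, ∃ a ∈ M, Routable TX πb W n a U

/-- The fiber `π_b^{-1}(b)` of a `Y`-symbol. -/
def fiber {AX AY : Type*} [Fintype AX] [DecidableEq AY] (πb : AX → AY) (b : AY) :
    Finset AX :=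
  Finset.univ.filter (fun a => πb a = b)

/-- `f = max_{w ∈ 𝒜(Y)} |π_b^{-1}(w)|`. -/
def fMax {AX AY : Type*} [Fintype AX] [Fintype AY] [DecidableEq AY] (πb : AX → AY) : ℕ :=
  Finset.univ.sup (fun b : AY => (fiber πb b).card)

section CDAux

variable {AX AY : Type*} {TX : AX → AX → Prop} {πb : AX → AY}

/-- Relation composition. -/
def Rcomp {AX : Type*} (A B : Set (AX × AX)) : Set (AX × AX) :=
  {p | ∃ x, (p.1, x) ∈ A ∧ (x, p.2) ∈ B}

lemma cd_getLast?_take_succ {α : Type*} {l : List α} {i : ℕ} (h : i < l.length) :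
    (l.take (i+1)).getLast? = l[i]? := by
  simp [List.getLast?_take, List.getElem?_eq_getElem h]

lemma cd_head?_take_succ {α : Type*} {l : List α} {i : ℕ} :
    (l.take (i+1)).head? = l.head? := by
  simp [List.head?_take]

lemma cd_getLast?_drop {α : Type*} {l : List α} {i : ℕ} (h : i < l.length) :
    (l.drop i).getLast? = l.getLast? := by
  rw [List.getLast?_drop, if_neg (by omega)]

lemma cd_head?_some {α : Type*} {l : List α} (h : l ≠ []) : ∃ a, l.head? = some a := by
  cases l with
  | nil => exact absurd rfl h
  | cons a t => exact ⟨a, rfl⟩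

lemma cd_getLast?_some {α : Type*} {l : List α} (h : l ≠ []) : ∃ a, l.getLast? = some a := by
  have hl : 0 < l.length := List.length_pos_iff.2 h
  exact ⟨l[l.length - 1]'(by omega), by
    rw [List.getLast?_eq_getElem?]; exact List.getElem?_eq_getElem (by omega)⟩

lemma preim_length {U : List AX} {W : List AY} (h : U ∈ preim TX πb W) :
    U.length = W.length := by
  rw [← h.2]; simp

lemma preim_take {U : List AX} {W : List AY} {i : ℕ} (h : U ∈ preim TX πb W) :
    U.take (i+1) ∈ preim TX πb (W.take (i+1)) := by
  refine ⟨⟨by simp [List.take_eq_nil_iff, h.1.1], h.1.2.prefix (List.take_prefix _ _)⟩, ?_⟩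
  rw [List.map_take, h.2]

lemma preim_drop {U : List AX} {W : List AY} {i : ℕ} (h : U ∈ preim TX πb W)
    (hi : i < W.length) : U.drop i ∈ preim TX πb (W.drop i) := by
  have hl : U.length = W.length := preim_length h
  refine ⟨⟨?_, h.1.2.suffix (List.drop_suffix _ _)⟩, by rw [List.map_drop, h.2]⟩
  simp only [ne_eq, List.drop_eq_nil_iff, hl, not_le]
  exact hi

lemma preim_triple {W : List AY} {U : List AX} {n : ℕ} (hU : U ∈ preim TX πb W)
    (hn : n < W.length) :
    ∃ p x q, U.head? = some p ∧ U[n]? = some x ∧ U.getLast? = some q := by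
  have hlen := preim_length hU
  obtain ⟨p, hp⟩ := cd_head?_some hU.1.1
  obtain ⟨q, hq⟩ := cd_getLast?_some hU.1.1
  exact ⟨p, U[n]'(by omega), q, hp, List.getElem?_eq_getElem (by omega), hq⟩

lemma preim_glue {V S : List AY} {U1 U2 : List AX}
    (h1 : U1 ∈ preim TX πb V) (h2 : U2 ∈ preim TX πb S)
    (hb : U1.getLast? = U2.head?) :
    U1 ++ U2.tail ∈ preim TX πb (V ++ S.tail) ∧
      (U1 ++ U2.tail).head? = U1.head? ∧
      (U1 ++ U2.tail).getLast? = U2.getLast? := by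
  obtain ⟨x, t, rfl⟩ : ∃ x t, U2 = x :: t := by
    cases U2 with
    | nil => exact absurd rfl h2.1.1
    | cons x t => exact ⟨x, t, rfl⟩
  have hx : U1.getLast? = some x := by simpa using hb
  obtain ⟨u, u1, rfl⟩ : ∃ u u1, U1 = u :: u1 := by
    cases U1 with
    | nil => exact absurd rfl h1.1.1
    | cons u u1 => exact ⟨u, u1, rfl⟩
  have hch : ((u :: u1) ++ t).Chain' TX := by
    refine h1.1.2.append (List.isChain_cons.1 h2.1.2).2 ?_
    intro y hy z hz
    have hyx : y = x := by
      rw [hx] at hy; exact (by simpa using hy : x = y).symm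
    subst hyx
    exact (List.isChain_cons.1 h2.1.2).1 z hz
  refine ⟨⟨⟨by simp, hch⟩, ?_⟩, by simp, ?_⟩
  · rw [List.map_append, h1.2, ← h2.2]
    rfl
  · rw [List.getLast?_append, show (x :: t) = [x] ++ t from rfl, List.getLast?_append, hx]
    rfl

lemma cd_glue_getElem {U1 U2 : List AX} {n : ℕ} (h : U1.length = n + 1) :
    (U1 ++ U2)[n]? = U1.getLast? := by
  rw [List.getElem?_append_left (by omega), List.getLast?_eq_getElem?, h]
  simp

lemma pairing_head_last {W : List AY} {p q : AX}
    (h : (p, q) ∈ pairing TX πb W) :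
    W.head? = some (πb p) ∧ W.getLast? = some (πb q) := by
  obtain ⟨U, hU, hh, hl⟩ := h
  constructor
  · rw [← hU.2, List.head?_map, hh]; rfl
  · rw [← hU.2, List.getLast?_map, hl]; rfl

lemma pairing_glue {V S : List AY} (hV : V ≠ []) (hS : S ≠ [])
    (hb : V.getLast? = S.head?) :
    pairing TX πb (V ++ S.tail) = Rcomp (pairing TX πb V) (pairing TX πb S) := by
  ext ⟨p, q⟩
  constructor
  · rintro ⟨U, hU, hh, hl⟩
    have hVlen : 1 ≤ V.length := List.length_pos_iff.2 hV
    have hUlen : U.length = V.length + S.tail.length := by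
      rw [preim_length hU]; simp
    set i := V.length - 1 with hi
    have hiU : i < U.length := by omega
    have hiW : i < (V ++ S.tail).length := by simp; omega
    obtain ⟨s, t, rfl⟩ : ∃ s t, S = s :: t := by
      cases S with
      | nil => exact absurd rfl hS
      | cons s t => exact ⟨s, t, rfl⟩
    have hVi : V[i]? = some s := by
      rw [hi, ← List.getLast?_eq_getElem?, hb]; rfl
    have h1 : U.take (i+1) ∈ preim TX πb ((V ++ (s :: t).tail).take (i+1)) := preim_take hU
    have hiv : i + 1 = V.length := by omega
    rw [show (V ++ (s :: t).tail).take (i+1) = V by rw [hiv, List.take_left]] at h1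
    have h2 : U.drop i ∈ preim TX πb ((V ++ (s :: t).tail).drop i) := preim_drop hU hiW
    have hdropS : (V ++ (s :: t).tail).drop i = s :: t := by
      have hdV : V.drop i = [s] := by
        rw [List.drop_eq_getElem_cons (by omega)]
        have hVe : V[i] = s := by
          have := List.getElem?_eq_getElem (l := V) (i := i) (by omega)
          rw [hVi] at this
          exact (Option.some.inj this).symm
        rw [hVe, show i + 1 = V.length by omega, List.drop_length]
      rw [List.drop_append_of_le_length (by omega), hdV]
      rfl
    rw [hdropS] at h2
    obtain ⟨x, hxU⟩ : ∃ x, U[i]? = some x := ⟨U[i]'hiU, List.getElem?_eq_getElem hiU⟩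
    refine ⟨x, ⟨U.take (i+1), h1, ?_, ?_⟩, ⟨U.drop i, h2, ?_, ?_⟩⟩
    · rw [cd_head?_take_succ]; exact hh
    · rw [cd_getLast?_take_succ hiU]; exact hxU
    · rw [List.head?_drop]; exact hxU
    · rw [cd_getLast?_drop hiU]; exact hl
  · rintro ⟨x, ⟨U1, hU1, hh1, hl1⟩, ⟨U2, hU2, hh2, hl2⟩⟩
    obtain ⟨hmem, hh, hl⟩ := preim_glue hU1 hU2 (by rw [hl1, hh2])
    exact ⟨U1 ++ U2.tail, hmem, by rw [hh, hh1], by rw [hl, hl2]⟩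

lemma pairing_split {W : List AY} {i : ℕ} (hi : i < W.length) :
    pairing TX πb W =
      Rcomp (pairing TX πb (W.take (i+1))) (pairing TX πb (W.drop i)) := by
  have hW : W ≠ [] := by
    intro h; rw [h] at hi; simp at hi
  have h := pairing_glue (TX := TX) (πb := πb) (V := W.take (i+1)) (S := W.drop i)
    (by simp [List.take_eq_nil_iff, hW]) (by simp [List.drop_eq_nil_iff]; omega)
    (by rw [cd_getLast?_take_succ hi, List.head?_drop])
  rwa [List.tail_drop, List.take_append_drop] at h

end CDAux
section CDAux2

variable {AX AY : Type*} {TX : AX → AX → Prop} {πb : AX → AY}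

lemma split_at {W : List AY} {U : List AX} {n : ℕ} {p x q : AX}
    (hn : n < W.length) (hU : U ∈ preim TX πb W)
    (hp : U.head? = some p) (hx : U[n]? = some x) (hq : U.getLast? = some q) :
    (p, x) ∈ pairing TX πb (W.take (n+1)) ∧ (x, q) ∈ pairing TX πb (W.drop n) := by
  have hlen := preim_length hU
  refine ⟨⟨U.take (n+1), preim_take hU, ?_, ?_⟩, ⟨U.drop n, preim_drop hU hn, ?_, ?_⟩⟩
  · rw [cd_head?_take_succ]; exact hp
  · rw [cd_getLast?_take_succ (by omega)]; exact hx
  · rw [List.head?_drop]; exact hx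
  · rw [cd_getLast?_drop (by omega)]; exact hq

lemma glue_at {W : List AY} {n : ℕ} {p x q : AX} (hn : n < W.length)
    (hA : (p, x) ∈ pairing TX πb (W.take (n+1)))
    (hB : (x, q) ∈ pairing TX πb (W.drop n)) :
    ∃ U ∈ preim TX πb W, U.head? = some p ∧ U[n]? = some x ∧ U.getLast? = some q := by
  obtain ⟨U1, hU1, hh1, hl1⟩ := hA
  obtain ⟨U2, hU2, hh2, hl2⟩ := hB
  obtain ⟨hmem, hh, hl⟩ := preim_glue hU1 hU2 (by rw [hl1, hh2])
  rw [List.tail_drop, List.take_append_drop] at hmem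
  have hlen1 : U1.length = n + 1 := by
    rw [preim_length hU1, List.length_take]; omega
  exact ⟨U1 ++ U2.tail, hmem, by rw [hh, hh1],
    by rw [cd_glue_getElem hlen1, hl1], by rw [hl, hl2]⟩

/-- The transition-block property expressed purely in terms of the two pairings. -/
def TBrel {AX : Type*} (A B : Set (AX × AX)) (M : Finset AX) : Prop :=
  (Rcomp A B).Nonempty ∧ (∀ a ∈ M, ∃ p q, (p, a) ∈ A ∧ (a, q) ∈ B) ∧
    ∀ p x q, (p, x) ∈ A → (x, q) ∈ B → ∃ m ∈ M, (p, m) ∈ A ∧ (m, q) ∈ B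

lemma isTransBlock_iff {W : List AY} {n : ℕ} {M : Finset AX}
    (hn1 : 0 < n) (hn2 : n < W.length - 1) :
    IsTransBlock TX πb W n M ↔
      TBrel (pairing TX πb (W.take (n+1))) (pairing TX πb (W.drop n)) M := by
  have hn : n < W.length := by omega
  constructor
  · rintro ⟨hY, -, -, hM, hRoute⟩
    refine ⟨?_, ?_, ?_⟩
    · obtain ⟨U, hU⟩ := hY
      obtain ⟨p, x, q, hp, hx, hq⟩ := preim_triple hU hn
      obtain ⟨h1, h2⟩ := split_at hn hU hp hx hq
      exact ⟨(p, q), x, h1, h2⟩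
    · intro a ha
      obtain ⟨U, hU, hUn⟩ := hM a ha
      obtain ⟨p, x, q, hp, hx, hq⟩ := preim_triple hU hn
      obtain ⟨h1, h2⟩ := split_at hn hU hp hUn hq
      exact ⟨p, q, h1, h2⟩
    · intro p x q hA hB
      obtain ⟨U, hU, hp, hx, hq⟩ := glue_at hn hA hB
      obtain ⟨m, hm, U', hU', hh', hx', hl'⟩ := hRoute U hU
      obtain ⟨h1, h2⟩ := split_at hn hU' (by rw [hh', hp]) hx' (by rw [hl', hq])
      exact ⟨m, hm, h1, h2⟩
  · rintro ⟨hne, hM, hRoute⟩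
    obtain ⟨⟨p0, q0⟩, x0, hA0, hB0⟩ := hne
    obtain ⟨U0, hU0, -⟩ := glue_at hn hA0 hB0
    refine ⟨⟨U0, hU0⟩, hn1, hn2, ?_, ?_⟩
    · intro a ha
      obtain ⟨p, q, h1, h2⟩ := hM a ha
      obtain ⟨U, hU, -, hx, -⟩ := glue_at hn h1 h2
      exact ⟨U, hU, hx⟩
    · intro U hU
      obtain ⟨p, x, q, hp, hx, hq⟩ := preim_triple hU hn
      obtain ⟨h1, h2⟩ := split_at hn hU hp hx hq
      obtain ⟨m, hm, hm1, hm2⟩ := hRoute p x q h1 h2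
      obtain ⟨U', hU', hp', hx', hq'⟩ := glue_at hn hm1 hm2
      exact ⟨m, hm, U', hU', by rw [hp', hp], hx', by rw [hq', hq]⟩

lemma transblock_transfer {W W' : List AY} {n n' : ℕ} {M : Finset AX}
    (h : IsTransBlock TX πb W n M) (hn1 : 0 < n') (hn2 : n' < W'.length - 1)
    (hA : pairing TX πb (W'.take (n'+1)) = pairing TX πb (W.take (n+1)))
    (hB : pairing TX πb (W'.drop n') = pairing TX πb (W.drop n)) :
    IsTransBlock TX πb W' n' M := by
  have h1 := h.2.1
  have h2 := h.2.2.1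
  rw [isTransBlock_iff h1 h2] at h
  rw [isTransBlock_iff hn1 hn2, hA, hB]
  exact h

end CDAux2
section CDAux3

variable {AX AY : Type*} {TX : AX → AX → Prop} {πb : AX → AY}

lemma splice_prefix {W : List AY} {n i j : ℕ} {M : Finset AX}
    (h : IsTransBlock TX πb W n M) (h1i : 1 ≤ i) (hij : i < j) (hjn : j ≤ n)
    (hsym : W[i]? = W[j]?)
    (hpair : pairing TX πb (W.take (i+1)) = pairing TX πb (W.take (j+1))) :
    ∃ W' n', IsTransBlock TX πb W' n' M ∧ W'.length < W.length := by
  have hn1 := h.2.1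
  have hn2 := h.2.2.1
  have hnW : n < W.length := by omega
  have hWne : W ≠ [] := by intro e; rw [e] at hnW; simp at hnW
  have hlen' : (W.take (i+1) ++ W.drop (j+1)).length = W.length - (j - i) := by
    rw [List.length_append, List.length_take_of_le (by omega), List.length_drop]
    omega
  refine ⟨W.take (i+1) ++ W.drop (j+1), i + (n - j),
    transblock_transfer h (by omega) (by rw [hlen']; omega) ?_ ?_, by rw [hlen']; omega⟩
  · -- pairing of the new prefix
    have e1 : (W.take (i+1) ++ W.drop (j+1)).take (i + (n - j) + 1) =
        W.take (i+1) ++ ((W.take (n+1)).drop j).tail := by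
      rw [List.take_append, List.length_take_of_le (by omega),
        List.take_of_length_le (by rw [List.length_take_of_le (by omega)]; omega),
        List.tail_drop]
      congr 1
      rw [show i + (n - j) + 1 - (i + 1) = n - j from by omega, List.take_drop,
        show j + 1 + (n - j) = n + 1 from by omega]
    rw [e1, pairing_glue (by simp [List.take_eq_nil_iff, hWne])
      (by simp [List.drop_eq_nil_iff, List.length_take_of_le (show n+1 ≤ W.length by omega)]; omega)
      (by rw [cd_getLast?_take_succ (show i < W.length by omega), List.head?_drop,
        List.getElem?_take_of_lt (show j < n+1 by omega)]; exact hsym)]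
    have hsplit := pairing_split (TX := TX) (πb := πb) (W := W.take (n+1)) (i := j)
      (by rw [List.length_take_of_le (by omega)]; omega)
    rw [List.take_take, min_eq_left (show j + 1 ≤ n + 1 by omega)] at hsplit
    rw [← hpair] at hsplit
    exact hsplit.symm
  · -- the new suffix is literally `W.drop n`
    have e2 : (W.take (i+1) ++ W.drop (j+1)).drop (i + (n - j)) = W.drop n := by
      rw [List.drop_append, List.length_take_of_le (by omega)]
      rcases eq_or_lt_of_le hjn with rfl | hjn'
      · -- j = n
        rw [show i + (j - j) = i from by omega, List.drop_take,
          show i + 1 - i = 1 from by omega, List.take_one, List.head?_drop, hsym,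
          show i - (i + 1) = 0 from by omega, List.drop_zero,
          List.getElem?_eq_getElem (show j < W.length from by omega),
          List.drop_eq_getElem_cons (show j < W.length from by omega)]
        rfl
      · -- j < n
        rw [List.drop_of_length_le (l := W.take (i+1))
            (by rw [List.length_take_of_le (by omega)]; omega),
          List.nil_append, List.drop_drop]
        congr 1
        omega
    rw [e2]

lemma splice_suffix {W : List AY} {n i j : ℕ} {M : Finset AX}
    (h : IsTransBlock TX πb W n M) (hni : n ≤ i) (hij : i < j) (hjW : j < W.length - 1)
    (hsym : W[i]? = W[j]?)
    (hpair : pairing TX πb (W.drop i) = pairing TX πb (W.drop j)) :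
    ∃ W' n', IsTransBlock TX πb W' n' M ∧ W'.length < W.length := by
  have hn1 := h.2.1
  have hn2 := h.2.2.1
  have hnW : n < W.length := by omega
  have hlen' : (W.take (i+1) ++ W.drop (j+1)).length = W.length - (j - i) := by
    rw [List.length_append, List.length_take_of_le (by omega), List.length_drop]
    omega
  refine ⟨W.take (i+1) ++ W.drop (j+1), n,
    transblock_transfer h hn1 (by rw [hlen']; omega) ?_ ?_, by rw [hlen']; omega⟩
  · -- the new prefix is literally `W.take (n+1)`
    have e1 : (W.take (i+1) ++ W.drop (j+1)).take (n + 1) = W.take (n+1) := by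
      rw [List.take_append, List.length_take_of_le (by omega),
        show n + 1 - (i+1) = 0 from by omega, List.take_zero, List.append_nil,
        List.take_take, min_eq_left (show n + 1 ≤ i + 1 by omega)]
    rw [e1]
  · -- pairing of the new suffix
    have e2 : (W.take (i+1) ++ W.drop (j+1)).drop n =
        (W.drop n).take ((i - n) + 1) ++ ((W.drop n).drop (j - n)).tail := by
      rw [List.drop_append, List.length_take_of_le (by omega),
        show n - (i+1) = 0 from by omega, List.drop_zero, List.drop_take,
        show i + 1 - n = (i - n) + 1 from by omega, List.tail_drop, List.drop_drop]
      congr 2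
      omega
    rw [e2, pairing_glue
      (by simp [List.take_eq_nil_iff, List.drop_eq_nil_iff]; omega)
      (by simp [List.drop_eq_nil_iff]; omega)
      (by rw [cd_getLast?_take_succ (show i - n < (W.drop n).length by simp; omega),
        List.head?_drop, List.getElem?_drop, List.getElem?_drop,
        show n + (i - n) = i from by omega, show n + (j - n) = j from by omega]; exact hsym)]
    have hd1 : (W.drop n).drop (j - n) = W.drop j := by
      rw [List.drop_drop]; congr 1; omega
    have hd2 : (W.drop n).drop (i - n) = W.drop i := by
      rw [List.drop_drop]; congr 1; omega
    have hsplit := pairing_split (TX := TX) (πb := πb) (W := W.drop n) (i := i - n)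
      (by simp; omega)
    rw [hd2] at hsplit
    rw [hd1, ← hpair]
    exact hsplit.symm

end CDAux3
section CDAux4

variable {AX AY : Type*} [Fintype AX] [Fintype AY] [DecidableEq AX] [DecidableEq AY]

/-- The fiber of `b` as a subtype. -/
abbrev CDFib (πb : AX → AY) (b : AY) := {a : AX // πb a = b}

/-- The pigeonhole key type. -/
abbrev CDKey (πb : AX → AY) (b0 : AY) := Σ b : AY, (CDFib πb b0 → CDFib πb b → Prop)

lemma cd_card_fib_le (πb : AX → AY) (b : AY) :
    Fintype.card (CDFib πb b) ≤ fMax πb := by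
  rw [Fintype.card_subtype]
  exact Finset.le_sup (f := fun b : AY => (fiber πb b).card) (Finset.mem_univ b)

lemma cd_card_key_le (πb : AX → AY) (b0 : AY) :
    Fintype.card (CDKey πb b0) ≤ Fintype.card AY * 2 ^ (fMax πb ^ 2) := by
  rw [Fintype.card_sigma]
  calc ∑ b : AY, Fintype.card (CDFib πb b0 → CDFib πb b → Prop)
      ≤ ∑ _b : AY, 2 ^ (fMax πb ^ 2) := by
        apply Finset.sum_le_sum
        intro b _
        rw [Fintype.card_fun, Fintype.card_fun, Fintype.card_prop, ← pow_mul]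
        calc 2 ^ (Fintype.card (CDFib πb b) * Fintype.card (CDFib πb b0))
            ≤ 2 ^ (fMax πb * fMax πb) :=
              Nat.pow_le_pow_right (by norm_num)
                (Nat.mul_le_mul (cd_card_fib_le πb b) (cd_card_fib_le πb b0))
          _ = 2 ^ (fMax πb ^ 2) := by rw [sq]
    _ = Fintype.card AY * 2 ^ (fMax πb ^ 2) := by
        rw [Finset.sum_const, Finset.card_univ, smul_eq_mul]

/-- Prefix encoder. -/
def cdEncP (πb : AX → AY) (b0 b : AY) (R : Set (AX × AX)) :
    CDFib πb b0 → CDFib πb b → Prop :=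
  fun x y => (x.1, y.1) ∈ R

/-- Suffix encoder (roles of the two coordinates swapped). -/
def cdEncS (πb : AX → AY) (bl b : AY) (R : Set (AX × AX)) :
    CDFib πb bl → CDFib πb b → Prop :=
  fun y x => (x.1, y.1) ∈ R

lemma cdEncP_inj {πb : AX → AY} {b0 b : AY} {R R' : Set (AX × AX)}
    (hR : ∀ p ∈ R, πb p.1 = b0 ∧ πb p.2 = b) (hR' : ∀ p ∈ R', πb p.1 = b0 ∧ πb p.2 = b)
    (h : cdEncP πb b0 b R = cdEncP πb b0 b R') : R = R' := by
  ext ⟨p, q⟩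
  constructor
  · intro hm
    obtain ⟨h1, h2⟩ := hR _ hm
    have he : cdEncP πb b0 b R ⟨p, h1⟩ ⟨q, h2⟩ = cdEncP πb b0 b R' ⟨p, h1⟩ ⟨q, h2⟩ :=
      congrFun (congrFun h ⟨p, h1⟩) ⟨q, h2⟩
    exact he.mp hm
  · intro hm
    obtain ⟨h1, h2⟩ := hR' _ hm
    have he : cdEncP πb b0 b R ⟨p, h1⟩ ⟨q, h2⟩ = cdEncP πb b0 b R' ⟨p, h1⟩ ⟨q, h2⟩ :=
      congrFun (congrFun h ⟨p, h1⟩) ⟨q, h2⟩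
    exact he.mpr hm

lemma cdEncS_inj {πb : AX → AY} {bl b : AY} {R R' : Set (AX × AX)}
    (hR : ∀ p ∈ R, πb p.1 = b ∧ πb p.2 = bl) (hR' : ∀ p ∈ R', πb p.1 = b ∧ πb p.2 = bl)
    (h : cdEncS πb bl b R = cdEncS πb bl b R') : R = R' := by
  ext ⟨p, q⟩
  constructor
  · intro hm
    obtain ⟨h1, h2⟩ := hR _ hm
    have he : cdEncS πb bl b R ⟨q, h2⟩ ⟨p, h1⟩ = cdEncS πb bl b R' ⟨q, h2⟩ ⟨p, h1⟩ :=
      congrFun (congrFun h ⟨q, h2⟩) ⟨p, h1⟩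
    exact he.mp hm
  · intro hm
    obtain ⟨h1, h2⟩ := hR' _ hm
    have he : cdEncS πb bl b R ⟨q, h2⟩ ⟨p, h1⟩ = cdEncS πb bl b R' ⟨q, h2⟩ ⟨p, h1⟩ :=
      congrFun (congrFun h ⟨q, h2⟩) ⟨p, h1⟩
    exact he.mpr hm

lemma cd_sigma_snd_eq {ι : Type*} {F : ι → Type*} {b : ι} {x y : F b}
    (h : (⟨b, x⟩ : Σ i, F i) = ⟨b, y⟩) : x = y :=
  eq_of_heq (Sigma.mk.inj_iff.mp h).2

lemma cd_pigeonhole {β : Type*} [Fintype β] {a b : ℕ} (g : ℕ → β)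
    (h : Fintype.card β < (Finset.Icc a b).card) :
    ∃ i ∈ Finset.Icc a b, ∃ j ∈ Finset.Icc a b, i < j ∧ g i = g j := by
  obtain ⟨i, hi, j, hj, hne, heq⟩ :=
    Finset.exists_ne_map_eq_of_card_lt_of_maps_to (t := (Finset.univ : Finset β))
      (by rw [Finset.card_univ]; exact h) (fun x _ => Finset.mem_univ (g x))
  rcases lt_or_gt_of_ne hne with h' | h'
  · exact ⟨i, hi, j, hj, h', heq⟩
  · exact ⟨j, hj, i, hi, h', heq.symm⟩

end CDAux4
section CDAux5

set_option linter.unusedSectionVars false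

variable {AX AY : Type*} [Fintype AX] [Fintype AY] [DecidableEq AX] [DecidableEq AY]
variable {TX : AX → AX → Prop} {πb : AX → AY}

lemma cd_shorten : ∀ (L : ℕ) (W : List AY) (n : ℕ) (M : Finset AX), W.length ≤ L →
    IsTransBlock TX πb W n M →
    ∃ W' n', IsTransBlock TX πb W' n' M ∧
      W'.length ≤ 2 * (Fintype.card AY * 2 ^ (fMax πb ^ 2)) + 1 := by
  intro L
  induction L with
  | zero =>
    intro W n M hL h
    have h1 := h.2.1
    have h2 := h.2.2.1
    omega
  | succ L ih =>
    intro W n M hL h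
    have hn1 := h.2.1
    have hn2 := h.2.2.1
    have hnW : n < W.length := by omega
    have hWne : W ≠ [] := by intro e; rw [e] at hnW; simp at hnW
    by_cases hshort : n ≤ Fintype.card AY * 2 ^ (fMax πb ^ 2) ∧
        W.length ≤ n + Fintype.card AY * 2 ^ (fMax πb ^ 2) + 1
    · exact ⟨W, n, h, by omega⟩
    rcases not_and_or.mp hshort with hbig | hbig
    · -- prefix too long
      push_neg at hbig
      obtain ⟨b0, hb0⟩ := cd_head?_some hWne
      obtain ⟨i, hi, j, hj, hij, heq⟩ := cd_pigeonhole
        (fun i => (⟨(W[i]?).getD b0,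
          cdEncP πb b0 ((W[i]?).getD b0) (pairing TX πb (W.take (i+1)))⟩ : CDKey πb b0))
        (a := 1) (b := n)
        (by rw [Nat.card_Icc]
            exact lt_of_le_of_lt (cd_card_key_le πb b0) (by omega))
      rw [Finset.mem_Icc] at hi hj
      have hiW : i < W.length := by omega
      have hjW : j < W.length := by omega
      obtain ⟨bi, hbi⟩ : ∃ x, W[i]? = some x := ⟨W[i], List.getElem?_eq_getElem hiW⟩
      obtain ⟨bj, hbj⟩ : ∃ x, W[j]? = some x := ⟨W[j], List.getElem?_eq_getElem hjW⟩
      have hsym : W[i]? = W[j]? := by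
        have hfst := congrArg Sigma.fst heq
        simp only [hbi, hbj] at hfst ⊢
        simpa using hfst
      rw [show ((W[i]?).getD b0) = ((W[j]?).getD b0) from by rw [hsym]] at heq
      have hpe := cd_sigma_snd_eq heq
      have hcond : ∀ (k : ℕ), k < W.length → ∀ p ∈ pairing TX πb (W.take (k+1)),
          πb p.1 = b0 ∧ πb p.2 = (W[k]?).getD b0 := by
        intro k hk p hp
        obtain ⟨hh, hl⟩ := pairing_head_last hp
        rw [cd_head?_take_succ, hb0] at hh
        rw [cd_getLast?_take_succ hk] at hl
        exact ⟨(Option.some.inj hh).symm, by rw [hl]; rfl⟩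
      have hci := hcond i hiW
      rw [hsym] at hci
      have hpair : pairing TX πb (W.take (i+1)) = pairing TX πb (W.take (j+1)) :=
        cdEncP_inj hci (hcond j hjW) hpe
      obtain ⟨W', n', h', hlt⟩ := splice_prefix h (by omega) hij (by omega) hsym hpair
      exact ih W' n' M (by omega) h'
    · -- suffix too long
      push_neg at hbig
      obtain ⟨bl, hbl⟩ := cd_getLast?_some hWne
      obtain ⟨i, hi, j, hj, hij, heq⟩ := cd_pigeonhole
        (fun i => (⟨(W[i]?).getD bl,
          cdEncS πb bl ((W[i]?).getD bl) (pairing TX πb (W.drop i))⟩ : CDKey πb bl))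
        (a := n) (b := W.length - 2)
        (by rw [Nat.card_Icc]
            exact lt_of_le_of_lt (cd_card_key_le πb bl) (by omega))
      rw [Finset.mem_Icc] at hi hj
      have hiW : i < W.length := by omega
      have hjW : j < W.length := by omega
      obtain ⟨bi, hbi⟩ : ∃ x, W[i]? = some x := ⟨W[i], List.getElem?_eq_getElem hiW⟩
      obtain ⟨bj, hbj⟩ : ∃ x, W[j]? = some x := ⟨W[j], List.getElem?_eq_getElem hjW⟩
      have hsym : W[i]? = W[j]? := by
        have hfst := congrArg Sigma.fst heq
        simp only [hbi, hbj] at hfst ⊢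
        simpa using hfst
      rw [show ((W[i]?).getD bl) = ((W[j]?).getD bl) from by rw [hsym]] at heq
      have hpe := cd_sigma_snd_eq heq
      have hcond : ∀ (k : ℕ), k < W.length → ∀ p ∈ pairing TX πb (W.drop k),
          πb p.1 = (W[k]?).getD bl ∧ πb p.2 = bl := by
        intro k hk p hp
        obtain ⟨hh, hl⟩ := pairing_head_last hp
        rw [List.head?_drop] at hh
        rw [cd_getLast?_drop hk, hbl] at hl
        exact ⟨by rw [hh]; rfl, (Option.some.inj hl).symm⟩
      have hci := hcond i hiW
      rw [hsym] at hci
      have hpair : pairing TX πb (W.drop i) = pairing TX πb (W.drop j) :=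
        cdEncS_inj hci (hcond j hjW) hpe
      obtain ⟨W', n', h', hlt⟩ := splice_suffix h (by omega) hij (by omega) hsym hpair
      exact ih W' n' M (by omega) h'

end CDAux5
/-- The class degree `c_π = c*_π` (the minimal depth of a transition block)
equals the minimal depth over transition blocks `(W, n, M)` with
`|W| ≤ |𝒜(Y)| · 2 ^ (f² + f + 1)`; hence it is computable. -/
theorem classDegree_computable {AX AY : Type*}
    [Fintype AX] [Fintype AY] [DecidableEq AX] [DecidableEq AY] [Nonempty AX]
    (TX : AX → AX → Prop) (πb : AX → AY)
    (hright : ∀ a : AX, ∃ b : AX, TX a b) (hleft : ∀ a : AX, ∃ b : AX, TX b a) :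
    sInf {k | ∃ (W : List AY) (n : ℕ) (M : Finset AX),
        IsTransBlock TX πb W n M ∧ M.card = k} =
      sInf {k | ∃ (W : List AY) (n : ℕ) (M : Finset AX),
        IsTransBlock TX πb W n M ∧
        W.length ≤ Fintype.card AY * 2 ^ ((fMax πb) ^ 2 + fMax πb + 1) ∧
        M.card = k} := by
  have hf : 1 ≤ fMax πb := by
    obtain ⟨a⟩ := ‹Nonempty AX›
    calc 1 ≤ (fiber πb (πb a)).card :=
          Finset.card_pos.2 ⟨a, by simp [fiber]⟩
      _ ≤ fMax πb := Finset.le_sup (f := fun b : AY => (fiber πb b).card) (Finset.mem_univ _)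
  have hAY : 1 ≤ Fintype.card AY :=
    Fintype.card_pos_iff.2 ⟨πb (Classical.arbitrary AX)⟩
  have hbound : 2 * (Fintype.card AY * 2 ^ (fMax πb ^ 2)) + 1 ≤
      Fintype.card AY * 2 ^ (fMax πb ^ 2 + fMax πb + 1) := by
    have he : 2 ^ (fMax πb ^ 2 + fMax πb + 1) =
        2 ^ (fMax πb ^ 2) * 2 ^ (fMax πb + 1) := by
      rw [← pow_add, Nat.add_assoc]
    have h4 : 4 ≤ 2 ^ (fMax πb + 1) := by
      calc (4 : ℕ) = 2 ^ 2 := by norm_num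
        _ ≤ 2 ^ (fMax πb + 1) := Nat.pow_le_pow_right (by norm_num) (by omega)
    have hP : 1 ≤ 2 ^ (fMax πb ^ 2) := Nat.one_le_two_pow
    rw [he]
    calc 2 * (Fintype.card AY * 2 ^ (fMax πb ^ 2)) + 1
        ≤ 2 * (Fintype.card AY * 2 ^ (fMax πb ^ 2)) +
            2 * (Fintype.card AY * 2 ^ (fMax πb ^ 2)) := by
          have h1 : 1 * 1 ≤ Fintype.card AY * 2 ^ (fMax πb ^ 2) := Nat.mul_le_mul hAY hP
          omega
      _ = Fintype.card AY * (2 ^ (fMax πb ^ 2) * 4) := by ring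
      _ ≤ Fintype.card AY * (2 ^ (fMax πb ^ 2) * 2 ^ (fMax πb + 1)) := by
          exact Nat.mul_le_mul_left _ (Nat.mul_le_mul_left _ h4)
  congr 1
  ext k
  simp only [Set.mem_setOf_eq]
  constructor
  · rintro ⟨W, n, M, hblk, rfl⟩
    obtain ⟨W', n', h', hlen⟩ := cd_shorten W.length W n M le_rfl hblk
    exact ⟨W', n', M, h', le_trans hlen hbound, rfl⟩
  · rintro ⟨W, n, M, hblk, -, rfl⟩
    exact ⟨W, n, M, hblk, rfl⟩
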